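/- Let (A,B) be a pair of d×d complex matrices with equal diagonals where A has nonnegative entries, B is hermitian, and A_{ij}A_{ji} ≥ |B_{ij}|² for all i,j. Then (A,B) is pairwise completely positive with factor width 2 if and only if B has factor width 2 (as a positive semidefinite matrix). -/

import Mathlib

open Matrix Finset
open scoped ComplexOrder

noncomputable section
namespace PCPaux

variable {d : ℕ}

def rt4 (t : ℝ) : ℝ := Real.sqrt (Real.sqrt t)

def pad (A B : Matrix (Fin d) (Fin d) ℂ) (i j : Fin d) : ℝ :=
  (A i j).re - (if i < j then (if B i j = 0 then 0 else (A i j).re)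
                else (if B j i = 0 then 0 else Complex.normSq (B j i) / (A j i).re))

def rv (B : Matrix (Fin d) (Fin d) ℂ) (p : Fin d → Fin d → ℝ) (i j : Fin d) : ℝ :=
  p j i - Complex.normSq (B i j) / p i j

def lov (B : Matrix (Fin d) (Fin d) ℂ) (p : Fin d → Fin d → ℝ) (i : Fin d) : ℝ :=
  (B i i).re - ∑ j ∈ univ.erase i, p i j

def V' (A B : Matrix (Fin d) (Fin d) ℂ) (p : Fin d → Fin d → ℝ) (i j x : Fin d) : ℂ :=
  if x = i then (if B i j = 0 then ((Real.sqrt (p i j) : ℝ) : ℂ)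
                      else ((Real.sqrt ((A i j).re) : ℝ) : ℂ))
       else if x = j then (starRingEnd ℂ) (B i j) / ((Real.sqrt (p i j) : ℝ) : ℂ)
       else 0

def W' (A B : Matrix (Fin d) (Fin d) ℂ) (p : Fin d → Fin d → ℝ) (i j x : Fin d) : ℂ :=
  if x = i then (if B i j = 0 then 1
                      else ((Real.sqrt (p i j / (A i j).re) : ℝ) : ℂ))
       else if x = j then (if B i j = 0 then 0 else 1)
       else 0

def V (A B : Matrix (Fin d) (Fin d) ℂ) (p : Fin d → Fin d → ℝ) :
    Fin d × Fin d × Fin 3 → Fin d → ℂ := fun n x =>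
  let i := n.1; let j := n.2.1; let k := n.2.2
  if k = 0 then (if i < j then V' A B p i j x else 0)
  else if k = 1 then
    (if i < j then (if x = j then ((rt4 (rv B p i j) : ℝ) : ℂ) else 0)
     else if i = j then (if x = i then ((rt4 (lov B p i) : ℝ) : ℂ) else 0)
     else 0)
  else
    (if i ≠ j ∧ x = i then ((Real.sqrt (pad A B i j) : ℝ) : ℂ) else 0)

def W (A B : Matrix (Fin d) (Fin d) ℂ) (p : Fin d → Fin d → ℝ) :
    Fin d × Fin d × Fin 3 → Fin d → ℂ := fun n x =>
  let i := n.1; let j := n.2.1; let k := n.2.2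
  if k = 0 then (if i < j then W' A B p i j x else 0)
  else if k = 1 then
    (if i < j then (if x = j then ((rt4 (rv B p i j) : ℝ) : ℂ) else 0)
     else if i = j then (if x = i then ((rt4 (lov B p i) : ℝ) : ℂ) else 0)
     else 0)
  else
    (if i ≠ j ∧ x = j then 1 else 0)

variable {A B : Matrix (Fin d) (Fin d) ℂ} {p : Fin d → Fin d → ℝ}

lemma V_eq_zero (n : Fin d × Fin d × Fin 3) (x : Fin d)
    (h1 : x ≠ n.1) (h2 : x ≠ n.2.1) : V A B p n x = 0 := by
  obtain ⟨i, j, k⟩ := n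
  simp only [V, V']
  split_ifs <;> simp_all

lemma supp_VW (n : Fin d × Fin d × Fin 3) (x : Fin d)
    (h1 : x ≠ n.1) (h2 : x ≠ n.2.1) : V A B p n x * W A B p n x = 0 := by
  rw [V_eq_zero n x h1 h2, zero_mul]

section core

variable (i j x y : Fin d)

lemma AEnt0' (hpij : 0 ≤ p i j) (haij : 0 ≤ (A i j).re)
    (hbp : B i j ≠ 0 → 0 < p i j) (hba : B i j ≠ 0 → 0 < (A i j).re) :
    (V' A B p i j x * star (V' A B p i j x)) *
      star (W' A B p i j y * star (W' A B p i j y)) =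
      (if x = i then (if y = i then ((p i j : ℝ):ℂ)
        else if y = j then (if B i j = 0 then 0 else (((A i j).re : ℝ):ℂ)) else 0)
      else if x = j then (if y = i then
          (if B i j = 0 then 0 else ((Complex.normSq (B i j) / (A i j).re : ℝ):ℂ))
        else if y = j then ((Complex.normSq (B i j) / p i j : ℝ):ℂ) else 0)
      else 0) := by
  simp only [V', W']
  by_cases hb : B i j = 0
  · simp only [hb, if_true, eq_self_iff_true, Complex.normSq_zero, ne_eq]
    split_ifs <;>
      simp_all [Complex.star_def, Complex.conj_ofReal, ← Complex.ofReal_mul,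
        Real.mul_self_sqrt hpij, _root_.map_zero]
  · have hp := hbp hb
    have ha := hba hb
    have hsp2 : ((Real.sqrt (p i j) : ℝ):ℂ) * ((Real.sqrt (p i j) : ℝ):ℂ) = ((p i j : ℝ):ℂ) := by
      rw [← Complex.ofReal_mul, Real.mul_self_sqrt hpij]
    have hsa2 : ((Real.sqrt ((A i j).re) : ℝ):ℂ) * ((Real.sqrt ((A i j).re) : ℝ):ℂ)
        = (((A i j).re : ℝ):ℂ) := by
      rw [← Complex.ofReal_mul, Real.mul_self_sqrt haij]
    have hspa2 : ((Real.sqrt (p i j / (A i j).re) : ℝ):ℂ) * ((Real.sqrt (p i j / (A i j).re) : ℝ):ℂ)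
        = ((p i j / (A i j).re : ℝ):ℂ) := by
      rw [← Complex.ofReal_mul, Real.mul_self_sqrt (div_nonneg hpij haij)]
    have hbb : (starRingEnd ℂ) (B i j) * B i j = ((Complex.normSq (B i j) : ℝ):ℂ) := by
      rw [mul_comm, Complex.mul_conj]
    simp only [hb, if_false]
    split_ifs <;>
      simp only [Complex.star_def, _root_.map_mul, map_div₀, Complex.conj_ofReal,
        Complex.conj_conj, _root_.map_one, mul_one, one_mul, _root_.map_zero,
        zero_mul, mul_zero] <;>
      try rfl
    · rw [hsa2, hspa2]
      norm_cast
      field_simp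
    · rw [hsa2]
    · rw [div_mul_div_comm, hbb, hsp2, hspa2]
      norm_cast
      field_simp
    · rw [div_mul_div_comm, hbb, hsp2]
      norm_cast

lemma BEnt0' (hpij : 0 ≤ p i j) (haij : 0 ≤ (A i j).re)
    (hbp : B i j ≠ 0 → 0 < p i j) (hba : B i j ≠ 0 → 0 < (A i j).re) :
    (V' A B p i j x * W' A B p i j x) *
      star (V' A B p i j y * W' A B p i j y) =
      (if x = i then (if y = i then ((p i j : ℝ):ℂ)
        else if y = j then B i j else 0)
      else if x = j then (if y = i then star (B i j)
        else if y = j then ((Complex.normSq (B i j) / p i j : ℝ):ℂ) else 0)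
      else 0) := by
  simp only [V', W']
  by_cases hb : B i j = 0
  · simp only [hb, if_true, eq_self_iff_true, Complex.normSq_zero, ne_eq]
    split_ifs <;>
      simp_all [Complex.star_def, Complex.conj_ofReal, ← Complex.ofReal_mul,
        Real.mul_self_sqrt hpij, _root_.map_zero]
  · have hp := hbp hb
    have ha := hba hb
    have hsp0 : ((Real.sqrt (p i j) : ℝ):ℂ) ≠ 0 := by
      simp [Real.sqrt_eq_zero' , not_le, ne_of_gt hp, (Real.sqrt_pos.2 hp).ne']
    have hprod : ((Real.sqrt ((A i j).re) : ℝ):ℂ) * ((Real.sqrt (p i j / (A i j).re) : ℝ):ℂ)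
        = ((Real.sqrt (p i j) : ℝ):ℂ) := by
      rw [← Complex.ofReal_mul, ← Real.sqrt_mul haij, mul_div_cancel₀ _ (ne_of_gt ha)]
    have hsp2 : ((Real.sqrt (p i j) : ℝ):ℂ) * ((Real.sqrt (p i j) : ℝ):ℂ) = ((p i j : ℝ):ℂ) := by
      rw [← Complex.ofReal_mul, Real.mul_self_sqrt hpij]
    have hbb : (starRingEnd ℂ) (B i j) * B i j = ((Complex.normSq (B i j) : ℝ):ℂ) := by
      rw [mul_comm, Complex.mul_conj]
    simp only [hb, if_false]
    split_ifs <;>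
      simp only [Complex.star_def, _root_.map_mul, map_div₀, Complex.conj_ofReal,
        Complex.conj_conj, _root_.map_one, mul_one, one_mul, _root_.map_zero,
        zero_mul, mul_zero] <;>
      try rfl
    · -- (i,i)
      rw [hprod, hsp2]
    · -- (i,j)
      rw [hprod, mul_comm, div_mul_cancel₀ _ hsp0]
    · -- (j,i)
      rw [hprod, div_mul_cancel₀ _ hsp0]
    · -- (j,j)
      rw [div_mul_div_comm, hbb, hsp2]
      norm_cast

end core

lemma sum_ite_const {α β : Type*} [Fintype α] [AddCommMonoid β] (c : Prop) [Decidable c]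
    (f : α → β) : (∑ j : α, if c then f j else 0) = if c then ∑ j : α, f j else 0 := by
  split_ifs <;> simp

section entries

lemma AEnt0 (hp0 : ∀ i j, 0 ≤ p i j) (hA0 : ∀ i j, 0 ≤ (A i j).re)
    (hbp : ∀ i j, B i j ≠ 0 → 0 < p i j) (hba : ∀ i j, B i j ≠ 0 → 0 < (A i j).re)
    (i j x y : Fin d) :
    (V A B p (i,j,0) x * star (V A B p (i,j,0) x)) *
      star (W A B p (i,j,0) y * star (W A B p (i,j,0) y)) =
      (if j = y then (if i = x then (if i < j then
          (if B i j = 0 then 0 else (((A i j).re : ℝ):ℂ)) else 0) else 0) else 0)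
    + (if j = x then (if i = y then (if i < j then
          (if B i j = 0 then 0 else ((Complex.normSq (B i j) / (A i j).re : ℝ):ℂ)) else 0) else 0) else 0)
    + (if i = x then (if x = y then (if i < j then ((p i j : ℝ):ℂ) else 0) else 0) else 0)
    + (if j = x then (if x = y then (if i < j then
          ((Complex.normSq (B i j) / p i j : ℝ):ℂ) else 0) else 0) else 0) := by
  by_cases hij : i < j
  · have e : V A B p (i,j,0) = V' A B p i j := by
      funext z; simp [V, hij]
    have e2 : W A B p (i,j,0) = W' A B p i j := by
      funext z; simp [W, hij]
    rw [e, e2, AEnt0' i j x y (hp0 i j) (hA0 i j) (hbp i j) (hba i j)]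
    have h1 : i ≠ j := hij.ne
    clear hp0 hA0 hbp hba e e2
    split_ifs <;> first | rfl | (subst_vars; simp_all)
  · have e : V A B p (i,j,0) = fun _ => 0 := by
      funext z; simp [V, hij]
    rw [e]
    simp only [zero_mul, star_zero]
    clear hp0 hA0 hbp hba e
    split_ifs <;> first | rfl | (subst_vars; simp_all)

lemma BEnt0 (hp0 : ∀ i j, 0 ≤ p i j) (hA0 : ∀ i j, 0 ≤ (A i j).re)
    (hbp : ∀ i j, B i j ≠ 0 → 0 < p i j) (hba : ∀ i j, B i j ≠ 0 → 0 < (A i j).re)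
    (i j x y : Fin d) :
    (V A B p (i,j,0) x * W A B p (i,j,0) x) *
      star (V A B p (i,j,0) y * W A B p (i,j,0) y) =
      (if j = y then (if i = x then (if i < j then B i j else 0) else 0) else 0)
    + (if j = x then (if i = y then (if i < j then star (B i j) else 0) else 0) else 0)
    + (if i = x then (if x = y then (if i < j then ((p i j : ℝ):ℂ) else 0) else 0) else 0)
    + (if j = x then (if x = y then (if i < j then
          ((Complex.normSq (B i j) / p i j : ℝ):ℂ) else 0) else 0) else 0) := by
  by_cases hij : i < j
  · have e : V A B p (i,j,0) = V' A B p i j := by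
      funext z; simp [V, hij]
    have e2 : W A B p (i,j,0) = W' A B p i j := by
      funext z; simp [W, hij]
    rw [e, e2, BEnt0' i j x y (hp0 i j) (hA0 i j) (hbp i j) (hba i j)]
    have h1 : i ≠ j := hij.ne
    clear hp0 hA0 hbp hba e e2
    split_ifs <;> first | rfl | (subst_vars; simp_all)
  · have e : V A B p (i,j,0) = fun _ => 0 := by
      funext z; simp [V, hij]
    rw [e]
    simp only [zero_mul, star_zero]
    clear hp0 hA0 hbp hba e
    split_ifs <;> first | rfl | (subst_vars; simp_all)

lemma AEnt1 (hrv : ∀ i j, i < j → 0 ≤ rv B p i j) (hlov : ∀ i, 0 ≤ lov B p i)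
    (i j x y : Fin d) :
    (V A B p (i,j,1) x * star (V A B p (i,j,1) x)) *
      star (W A B p (i,j,1) y * star (W A B p (i,j,1) y)) =
      (if j = x then (if x = y then (if i < j then ((rv B p i j : ℝ):ℂ) else 0) else 0) else 0)
    + (if j = i then (if i = x then (if x = y then ((lov B p i : ℝ):ℂ) else 0) else 0) else 0) := by
  have key : ∀ t : ℝ, 0 ≤ t → ((rt4 t : ℝ):ℂ) * ((rt4 t : ℝ):ℂ) * (((rt4 t : ℝ):ℂ) * ((rt4 t : ℝ):ℂ)) = ((t:ℝ):ℂ) := by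
    intro t ht
    have h4 : rt4 t * rt4 t * (rt4 t * rt4 t) = t := by
      rw [rt4, Real.mul_self_sqrt (Real.sqrt_nonneg _), Real.mul_self_sqrt ht]
    calc ((rt4 t : ℝ):ℂ) * ((rt4 t : ℝ):ℂ) * (((rt4 t : ℝ):ℂ) * ((rt4 t : ℝ):ℂ))
        = ((rt4 t * rt4 t * (rt4 t * rt4 t) : ℝ) : ℂ) := by push_cast; ring
      _ = ((t:ℝ):ℂ) := by rw [h4]
  rcases lt_trichotomy i j with h | h | h
  · have h2 : j ≠ i := h.ne'
    have hr := hrv i j h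
    simp only [V, W]
    norm_num
    simp only [h, if_true]
    split_ifs <;> (try subst_vars) <;>
      simp_all [Complex.star_def, Complex.conj_ofReal, key _ hr]
  · subst h
    simp only [V, W]
    norm_num
    split_ifs <;> (try subst_vars) <;>
      simp_all [Complex.star_def, Complex.conj_ofReal, key _ (hlov _)]
  · have h1 : ¬ i < j := not_lt_of_gt h
    have h2 : i ≠ j := h.ne'
    have h3 : j ≠ i := h.ne
    simp only [V, W]
    norm_num
    simp only [h1, h2, h3, if_false]
    split_ifs <;> simp_all

lemma BEnt1 (hrv : ∀ i j, i < j → 0 ≤ rv B p i j) (hlov : ∀ i, 0 ≤ lov B p i)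
    (i j x y : Fin d) :
    (V A B p (i,j,1) x * W A B p (i,j,1) x) *
      star (V A B p (i,j,1) y * W A B p (i,j,1) y) =
      (if j = x then (if x = y then (if i < j then ((rv B p i j : ℝ):ℂ) else 0) else 0) else 0)
    + (if j = i then (if i = x then (if x = y then ((lov B p i : ℝ):ℂ) else 0) else 0) else 0) := by
  have key : ∀ t : ℝ, 0 ≤ t → ((rt4 t : ℝ):ℂ) * ((rt4 t : ℝ):ℂ) * (((rt4 t : ℝ):ℂ) * ((rt4 t : ℝ):ℂ)) = ((t:ℝ):ℂ) := by
    intro t ht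
    have h4 : rt4 t * rt4 t * (rt4 t * rt4 t) = t := by
      rw [rt4, Real.mul_self_sqrt (Real.sqrt_nonneg _), Real.mul_self_sqrt ht]
    calc ((rt4 t : ℝ):ℂ) * ((rt4 t : ℝ):ℂ) * (((rt4 t : ℝ):ℂ) * ((rt4 t : ℝ):ℂ))
        = ((rt4 t * rt4 t * (rt4 t * rt4 t) : ℝ) : ℂ) := by push_cast; ring
      _ = ((t:ℝ):ℂ) := by rw [h4]
  rcases lt_trichotomy i j with h | h | h
  · have h2 : j ≠ i := h.ne'
    have hr := hrv i j h
    simp only [V, W]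
    norm_num
    simp only [h, if_true]
    split_ifs <;> (try subst_vars) <;>
      simp_all [Complex.star_def, Complex.conj_ofReal, key _ hr]
  · subst h
    simp only [V, W]
    norm_num
    split_ifs <;> (try subst_vars) <;>
      simp_all [Complex.star_def, Complex.conj_ofReal, key _ (hlov _)]
  · have h1 : ¬ i < j := not_lt_of_gt h
    have h2 : i ≠ j := h.ne'
    have h3 : j ≠ i := h.ne
    simp only [V, W]
    norm_num
    simp only [h1, h2, h3, if_false]
    split_ifs <;> simp_all

lemma AEnt2 (hpad : ∀ i j, i ≠ j → 0 ≤ pad A B i j) (i j x y : Fin d) :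
    (V A B p (i,j,2) x * star (V A B p (i,j,2) x)) *
      star (W A B p (i,j,2) y * star (W A B p (i,j,2) y)) =
      (if j = y then (if i = x then (if i ≠ j then ((pad A B i j : ℝ):ℂ) else 0) else 0) else 0) := by
  simp only [V, W]
  norm_num
  by_cases hij : i = j
  · simp [hij]
  · have h := hpad i j hij
    have key2 : ((Real.sqrt (pad A B i j) : ℝ):ℂ) * ((Real.sqrt (pad A B i j) : ℝ):ℂ)
        = ((pad A B i j : ℝ):ℂ) := by
      rw [← Complex.ofReal_mul, Real.mul_self_sqrt h]
    split_ifs <;> (try subst_vars) <;>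
      simp_all [Complex.star_def, Complex.conj_ofReal, key2]

lemma BEnt2 (i j x y : Fin d) :
    (V A B p (i,j,2) x * W A B p (i,j,2) x) *
      star (V A B p (i,j,2) y * W A B p (i,j,2) y) = 0 := by
  simp only [V, W]
  norm_num
  split_ifs <;> simp_all

end entries

lemma ite_ofReal (c : Prop) [Decidable c] (r : ℝ) :
    (if c then (r:ℂ) else 0) = ((if c then r else 0 : ℝ) : ℂ) := by
  split_ifs <;> simp

lemma card_le_pair {i j : Fin d} {P : Fin d → Prop} [DecidablePred P]
    (h : ∀ x, P x → x = i ∨ x = j) : (univ.filter P).card ≤ 2 := by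
  have hsub : univ.filter P ⊆ {i, j} := by
    intro x hx
    rcases h x (Finset.mem_filter.mp hx).2 with rfl | rfl <;> simp
  exact (Finset.card_le_card hsub).trans ((Finset.card_insert_le _ _).trans (by simp))

lemma split_sum_lt (f : Fin d → ℝ) (x : Fin d) :
    (∑ j, if x < j then f j else 0) + (∑ j, if j < x then f j else 0)
      = ∑ j ∈ univ.erase x, f j := by
  rw [← Finset.sum_add_distrib, Finset.sum_erase_eq_sub (Finset.mem_univ x)]
  have h : ∀ j, (if x < j then f j else 0) + (if j < x then f j else 0)
      = f j - (if j = x then f j else 0) := by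
    intro j
    rcases lt_trichotomy x j with h | h | h
    · simp [h, not_lt_of_gt h, h.ne', lt_irrefl, h.ne]
    · simp [h, lt_irrefl]
    · simp [h, not_lt_of_gt h, h.ne, h.ne']
  rw [Finset.sum_congr rfl (fun j _ => h j), Finset.sum_sub_distrib,
    Finset.sum_ite_eq' univ x f]
  simp

lemma construct (A B : Matrix (Fin d) (Fin d) ℂ) (p : Fin d → Fin d → ℝ)
    (hdiag : ∀ i, A i i = B i i)
    (hA : ∀ i j, (A i j).im = 0 ∧ 0 ≤ (A i j).re)
    (hherm : B.IsHermitian)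
    (hineq : ∀ i j, Complex.normSq (B i j) ≤ (A i j).re * (A j i).re)
    (hp0 : ∀ i j, 0 ≤ p i j)
    (hpB : ∀ i j, Complex.normSq (B i j) ≤ p i j * p j i)
    (hpd : ∀ i, ∑ j ∈ univ.erase i, p i j ≤ (B i i).re) :
    ∃ (N : ℕ) (v w : Fin N → Fin d → ℂ),
      (∀ n, (univ.filter (fun i => v n i * w n i ≠ 0)).card ≤ 2) ∧
      A = ∑ n, vecMulVec (fun i => v n i * star (v n i))
                (star fun j => w n j * star (w n j)) ∧
      B = ∑ n, vecMulVec (fun i => v n i * w n i)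
                (star fun j => v n j * w n j) := by
  classical
  have hA0 : ∀ i j, 0 ≤ (A i j).re := fun i j => (hA i j).2
  have hAre : ∀ i j, A i j = (((A i j).re : ℝ) : ℂ) := by
    intro i j
    conv_lhs => rw [← Complex.re_add_im (A i j), (hA i j).1]
    simp
  have hbp : ∀ i j, B i j ≠ 0 → 0 < p i j := by
    intro i j hb
    rcases (hp0 i j).lt_or_eq with h | h
    · exact h
    · exfalso
      have h1 := hpB i j
      rw [← h, zero_mul] at h1
      exact absurd (le_antisymm h1 (Complex.normSq_nonneg _))
        (fun hh => hb (by simpa using Complex.normSq_eq_zero.mp hh))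
  have hba : ∀ i j, B i j ≠ 0 → 0 < (A i j).re := by
    intro i j hb
    rcases (hA0 i j).lt_or_eq with h | h
    · exact h
    · exfalso
      have h1 := hineq i j
      rw [← h, zero_mul] at h1
      exact absurd (le_antisymm h1 (Complex.normSq_nonneg _))
        (fun hh => hb (by simpa using Complex.normSq_eq_zero.mp hh))
  have hrv : ∀ i j, i < j → 0 ≤ rv B p i j := by
    intro i j hij
    unfold rv
    by_cases hb : B i j = 0
    · simp only [hb, Complex.normSq_zero, zero_div, sub_zero]
      exact hp0 j i
    · have hpij := hbp i j hb
      rw [sub_nonneg, div_le_iff₀ hpij]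
      calc Complex.normSq (B i j) ≤ p i j * p j i := hpB i j
        _ = p j i * p i j := mul_comm _ _
  have hlov : ∀ i, 0 ≤ lov B p i := fun i => sub_nonneg.2 (hpd i)
  have hpad : ∀ i j, i ≠ j → 0 ≤ pad A B i j := by
    intro i j hne
    unfold pad
    by_cases hij : i < j
    · simp only [hij, if_true]
      by_cases hb : B i j = 0
      · simpa [hb] using hA0 i j
      · simp [hb]
    · simp only [hij, if_false]
      by_cases hb : B j i = 0
      · simpa [hb] using hA0 i j
      · simp only [hb, if_false]
        rw [sub_nonneg, div_le_iff₀ (hba j i hb)]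
        calc Complex.normSq (B j i) ≤ (A j i).re * (A i j).re := hineq j i
          _ = (A i j).re * (A j i).re := mul_comm _ _
  have hBre : ∀ i, B i i = (((B i i).re : ℝ) : ℂ) := by
    intro i
    have h := hherm.apply i i
    exact (Complex.conj_eq_iff_re.mp h).symm
  -- index equivalence
  set ι := (Fin d × Fin d × Fin 3)
  refine ⟨Fintype.card ι, fun n => V A B p ((Fintype.equivFin ι).symm n),
    fun n => W A B p ((Fintype.equivFin ι).symm n), ?_, ?_, ?_⟩
  · intro n
    apply card_le_pair (i := ((Fintype.equivFin ι).symm n).1)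
      (j := ((Fintype.equivFin ι).symm n).2.1)
    intro x hx
    by_contra hc
    push_neg at hc
    exact hx (supp_VW _ _ hc.1 hc.2)
  · -- A equation
    rw [Equiv.sum_comp ((Fintype.equivFin ι).symm)
      (fun m => vecMulVec (fun i => V A B p m i * star (V A B p m i))
        (star fun j => W A B p m j * star (W A B p m j)))]
    ext x y
    rw [Matrix.sum_apply]
    simp only [vecMulVec_apply, Pi.star_apply]
    rw [Fintype.sum_prod_type]
    simp only [Fintype.sum_prod_type, Fin.sum_univ_three]
    simp only [AEnt0 hp0 hA0 hbp hba, AEnt1 hrv hlov, AEnt2 hpad]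
    simp only [Finset.sum_add_distrib]
    simp only [sum_ite_const, Finset.sum_ite_eq', Finset.mem_univ, if_true,
      Finset.sum_const_zero]
    rcases lt_trichotomy x y with hxy | hxy | hxy
    · simp only [hxy, hxy.ne, hxy.ne', not_lt_of_gt hxy, lt_asymm hxy, if_true, if_false,
        ne_eq, not_false_iff, add_zero, zero_add, lt_irrefl]
      by_cases hb : B x y = 0 <;>
        · simp only [pad, hb, hxy, if_true, if_false]
          rw [hAre x y]
          push_cast [Complex.ofReal_re]
          ring
    · subst hxy
      simp only [lt_irrefl, if_false, if_true, ne_eq, not_true, add_zero, zero_add]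
      rw [hdiag x, hBre x]
      simp only [ite_ofReal, ← Complex.ofReal_sum, ← Complex.ofReal_add]
      norm_cast
      have hmerge : (∑ i, if i < x then Complex.normSq (B i x) / p i x else 0)
          + (∑ i, if i < x then rv B p i x else 0)
          = ∑ i, if i < x then p x i else 0 := by
        rw [← Finset.sum_add_distrib]
        refine Finset.sum_congr rfl fun i _ => ?_
        split_ifs with h
        · unfold rv; ring
        · simp
      unfold lov
      have hsplit := split_sum_lt (fun j => p x j) x
      linarith [hmerge, hsplit]
    · simp only [hxy, hxy.ne, hxy.ne', not_lt_of_gt hxy, lt_asymm hxy, if_true, if_false,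
        ne_eq, not_false_iff, add_zero, zero_add, lt_irrefl]
      by_cases hb : B y x = 0 <;>
        · simp only [pad, hb, not_lt_of_gt hxy, if_true, if_false]
          rw [hAre x y]
          push_cast [Complex.ofReal_re]
          ring
  · -- B equation
    rw [Equiv.sum_comp ((Fintype.equivFin ι).symm)
      (fun m => vecMulVec (fun i => V A B p m i * W A B p m i)
        (star fun j => V A B p m j * W A B p m j))]
    ext x y
    rw [Matrix.sum_apply]
    simp only [vecMulVec_apply, Pi.star_apply]
    rw [Fintype.sum_prod_type]
    simp only [Fintype.sum_prod_type, Fin.sum_univ_three]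
    simp only [BEnt0 hp0 hA0 hbp hba, BEnt1 hrv hlov, BEnt2]
    simp only [Finset.sum_add_distrib]
    simp only [sum_ite_const, Finset.sum_ite_eq', Finset.mem_univ, if_true,
      Finset.sum_const_zero]
    rcases lt_trichotomy x y with hxy | hxy | hxy
    · simp [hxy, hxy.ne, hxy.ne', not_lt_of_gt hxy, lt_asymm hxy, lt_irrefl]
    · subst hxy
      simp only [lt_irrefl, if_false, if_true, ne_eq, not_true, add_zero, zero_add]
      rw [hBre x]
      simp only [ite_ofReal, ← Complex.ofReal_sum, ← Complex.ofReal_add]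
      norm_cast
      have hmerge : (∑ i, if i < x then Complex.normSq (B i x) / p i x else 0)
          + (∑ i, if i < x then rv B p i x else 0)
          = ∑ i, if i < x then p x i else 0 := by
        rw [← Finset.sum_add_distrib]
        refine Finset.sum_congr rfl fun i _ => ?_
        split_ifs with h
        · unfold rv; ring
        · simp
      unfold lov
      have hsplit := split_sum_lt (fun j => p x j) x
      linarith [hmerge, hsplit]
    · have h := hherm.apply x y
      simp [hxy, hxy.ne, hxy.ne', not_lt_of_gt hxy, lt_asymm hxy, lt_irrefl, ← h]

end PCPaux
end

open PCPaux in
/-- Under the necessary PCP conditions (equal diagonals, `A` entrywise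
nonnegative, `B` hermitian, `A_{ij}A_{ji} ≥ |B_{ij}|²`), the pair `(A,B)` is pairwise
completely positive with factor width 2 iff `B` has factor width 2. -/
theorem pcp_factor_width_two_iff_psd_factor_width_two {d : ℕ}
    (A B : Matrix (Fin d) (Fin d) ℂ) (hdiag : ∀ i, A i i = B i i)
    (hA : ∀ i j, (A i j).im = 0 ∧ 0 ≤ (A i j).re)
    (hherm : B.IsHermitian)
    (hineq : ∀ i j, ‖B i j‖ ^ 2 ≤ (A i j).re * (A j i).re) :
    (∃ (N : ℕ) (v w : Fin N → Fin d → ℂ),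
      (∀ n, (univ.filter (fun i => v n i * w n i ≠ 0)).card ≤ 2) ∧
      A = ∑ n, vecMulVec (fun i => v n i * star (v n i))
                (star fun j => w n j * star (w n j)) ∧
      B = ∑ n, vecMulVec (fun i => v n i * w n i)
                (star fun j => v n j * w n j))
    ↔ (∃ (M : ℕ) (u : Fin M → Fin d → ℂ),
        (∀ m, (univ.filter (fun i => u m i ≠ 0)).card ≤ 2) ∧
        B = ∑ m, vecMulVec (u m) (star (u m))) := by
  constructor
  · rintro ⟨N, v, w, hcard, hAeq, hBeq⟩
    exact ⟨N, fun n i => v n i * w n i, hcard, hBeq⟩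
  · rintro ⟨M, u, hcard, hB⟩
    classical
    have hBij : ∀ i j, B i j = ∑ m, u m i * (starRingEnd ℂ) (u m j) := by
      intro i j
      rw [hB, Matrix.sum_apply]
      simp [vecMulVec_apply, Pi.star_apply, Complex.star_def]
    set p : Fin d → Fin d → ℝ := fun i j => ∑ m, if u m j ≠ 0 then ‖u m i‖^2 else 0 with hpdef
    have hp0 : ∀ i j, 0 ≤ p i j := by
      intro i j
      refine Finset.sum_nonneg fun m _ => ?_
      split_ifs <;> positivity
    have hpB : ∀ i j, Complex.normSq (B i j) ≤ p i j * p j i := by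
      intro i j
      have h1 : ‖B i j‖ ≤ ∑ m, (if u m j ≠ 0 then ‖u m i‖ else 0)
          * (if u m i ≠ 0 then ‖u m j‖ else 0) := by
        rw [hBij i j]
        refine (norm_sum_le _ _).trans (le_of_eq (Finset.sum_congr rfl fun m _ => ?_))
        by_cases h1 : u m i = 0 <;> by_cases h2 : u m j = 0 <;>
          simp [h1, h2, norm_mul]
      have h2 := Finset.sum_mul_sq_le_sq_mul_sq univ
        (fun m => if u m j ≠ 0 then ‖u m i‖ else 0)
        (fun m => if u m i ≠ 0 then ‖u m j‖ else 0)
      have h3 : (∑ m, (if u m j ≠ 0 then ‖u m i‖ else 0)^2) = p i j := by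
        refine Finset.sum_congr rfl fun m _ => ?_
        split_ifs <;> simp
      have h4 : (∑ m, (if u m i ≠ 0 then ‖u m j‖ else 0)^2) = p j i := by
        refine Finset.sum_congr rfl fun m _ => ?_
        split_ifs <;> simp
      have h5 : Complex.normSq (B i j) = ‖B i j‖^2 := by
        rw [Complex.normSq_eq_norm_sq]
      rw [h5, ← h3, ← h4]
      exact (pow_le_pow_left₀ (norm_nonneg _) h1 2).trans h2
    have hpd : ∀ i, ∑ j ∈ univ.erase i, p i j ≤ (B i i).re := by
      intro i
      have hBii : (B i i).re = ∑ m, ‖u m i‖^2 := by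
        rw [hBij i i, Complex.re_sum]
        refine Finset.sum_congr rfl fun m _ => ?_
        rw [Complex.mul_conj]
        rw [Complex.ofReal_re, Complex.normSq_eq_norm_sq]
      rw [hBii, Finset.sum_comm]
      refine Finset.sum_le_sum fun m _ => ?_
      by_cases hui : u m i = 0
      · simp [hui]
      · calc ∑ j ∈ univ.erase i, (if u m j ≠ 0 then ‖u m i‖^2 else 0)
            = ∑ j ∈ (univ.erase i).filter (fun j => u m j ≠ 0), ‖u m i‖^2 :=
              (Finset.sum_filter _ _).symm
          _ = ((univ.erase i).filter (fun j => u m j ≠ 0)).card • ‖u m i‖^2 :=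
              Finset.sum_const _
          _ ≤ 1 * ‖u m i‖^2 := by
              rw [nsmul_eq_mul]
              refine mul_le_mul_of_nonneg_right ?_ (sq_nonneg _)
              have hsub : (univ.erase i).filter (fun j => u m j ≠ 0)
                  ⊆ (univ.filter (fun j => u m j ≠ 0)).erase i := by
                intro z hz
                simp only [Finset.mem_filter, Finset.mem_erase, Finset.mem_univ,
                  true_and] at hz ⊢
                tauto
              have h2 := Finset.card_le_card hsub
              have h3 : i ∈ univ.filter (fun j => u m j ≠ 0) := by simp [hui]
              have h4 := Finset.card_erase_of_mem h3
              have h5 := hcard m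
              have : ((univ.erase i).filter (fun j => u m j ≠ 0)).card ≤ 1 := by omega
              exact_mod_cast this
          _ = ‖u m i‖^2 := one_mul _
    exact construct A B p hdiag hA hherm
      (by intro i j; rw [← Complex.sq_norm]; exact hineq i j) hp0 hpB hpd
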